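/- arXiv:1707.09670 — 4 statements merged into one kernel-verified Lean document; each statement's English description precedes it below -/
import Mathlib

section
/- Let V be a set with exactly 3 elements. There is no simple graph G on vertex set V such that the family of nonempty subsets of closed neighborhoods of vertices of G equals the family of all nonempty proper subsets of V. (Equivalently: the boundary of a triangle is not the neighborhood complex of any graph.) -/
/-- The closed neighborhood of a vertex `v` in a simple graph `G`. -/
def closedNbhd {V : Type*} (G : SimpleGraph V) (v : V) : Set V :=
  insert v (G.neighborSet v)

private lemma three_cover {V : Type*} [Fintype V] [DecidableEq V]
    (hV : Fintype.card V = 3) (a b c : V) (hab : a ≠ b) (hac : a ≠ c) (hbc : b ≠ c) :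
    ∀ x : V, x = a ∨ x = b ∨ x = c := by
  have hcard : ({a, b, c} : Finset V).card = 3 := by
    rw [Finset.card_insert_of_notMem (by simp [hab, hac]),
      Finset.card_insert_of_notMem (by simp [hbc]), Finset.card_singleton]
  have huniv : ({a, b, c} : Finset V) = Finset.univ :=
    Finset.eq_univ_of_card _ (by rw [hcard, hV])
  intro x
  have : x ∈ ({a, b, c} : Finset V) := huniv ▸ Finset.mem_univ x
  simpa using this

/-- Let `V` have exactly 3 elements.  There is no simple graph `G` on `V` whose
neighborhood complex (the family of nonempty subsets of closed neighborhoods of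
vertices) equals the family of all nonempty proper subsets of `V`: the boundary of a
triangle is not the neighborhood complex of any graph. -/
theorem boundary_triangle_not_neighborhood_complex {V : Type*} [Fintype V]
    (hV : Fintype.card V = 3) :
    ¬ ∃ G : SimpleGraph V,
        ∀ s : Set V,
          (s.Nonempty ∧ ∃ v : V, s ⊆ closedNbhd G v) ↔ (s.Nonempty ∧ s ≠ Set.univ) := by
  classical
  rintro ⟨G, h⟩
  have hproper : ∀ v : V, closedNbhd G v ≠ Set.univ := fun v =>
    ((h _).mp ⟨⟨v, by simp [closedNbhd]⟩, v, subset_rfl⟩).2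
  have hadj : ∀ a b : V, a ≠ b → G.Adj a b := by
    intro a b hab
    have hprop : ({a, b} : Set V) ≠ Set.univ := by
      intro heq
      have hsub : (Finset.univ : Finset V) ⊆ {a, b} := by
        intro x _
        have hx : x ∈ ({a, b} : Set V) := heq ▸ Set.mem_univ x
        simpa using hx
      have := Finset.card_le_card hsub
      rw [Finset.card_univ, hV] at this
      have h2 : ({a, b} : Finset V).card ≤ 2 := Finset.card_insert_le _ _ |>.trans (by simp)
      omega
    obtain ⟨_, v, hv⟩ := (h {a, b}).mpr ⟨⟨a, by simp⟩, hprop⟩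
    have ha : a ∈ closedNbhd G v := hv (by simp)
    have hb : b ∈ closedNbhd G v := hv (by simp)
    rcases eq_or_ne v a with rfl | hva
    · rcases hb with rfl | hb
      · exact absurd rfl hab
      · exact hb
    rcases eq_or_ne v b with rfl | hvb
    · rcases ha with rfl | ha
      · exact absurd rfl hab
      · exact (G.adj_symm ha)
    · have h1 : G.Adj v a := by
        rcases ha with rfl | ha
        · exact absurd rfl hva
        · exact ha
      have h2 : G.Adj v b := by
        rcases hb with rfl | hb
        · exact absurd rfl hvb
        · exact hb
      exfalso
      apply hproper v
      ext x
      simp only [Set.mem_univ, iff_true, closedNbhd, Set.mem_insert_iff,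
        SimpleGraph.mem_neighborSet]
      rcases three_cover hV v a b hva hvb hab x with rfl | rfl | rfl
      · exact Or.inl rfl
      · exact Or.inr h1
      · exact Or.inr h2
  have hne : Nonempty V := Fintype.card_pos_iff.mp (by omega)
  obtain ⟨a⟩ := hne
  apply hproper a
  ext x
  simp only [Set.mem_univ, iff_true, closedNbhd, Set.mem_insert_iff,
    SimpleGraph.mem_neighborSet]
  rcases eq_or_ne x a with rfl | hxa
  · exact Or.inl rfl
  · exact Or.inr (hadj a x hxa.symm)
end

section
/- Let G be a simple graph on a vertex set V and let x, y be two distinct elements not in V. Define the graph ElSusp(G) on vertex set V ∪ {x, y} whose edges are the edges of G together with the single extra edge ⟨x, y⟩. Then a nonempty subset Y of V ∪ {x, y} is enclaveless in ElSusp(G) if and only if Y does not contain both x and y, and Y ∩ V is either empty or enclaveless in G. (This realizes the suspension: El(ElSusp(G)) is the suspension of El(G) with apexes x and y.) -/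
/-- A set `Y` of vertices is enclaveless if no `v ∈ Y` has its whole closed neighborhood
contained in `Y`. -/
def Enclaveless {V : Type*} (G : SimpleGraph V) (Y : Set V) : Prop :=
  ¬ ∃ v ∈ Y, closedNbhd G v ⊆ Y

/-- The graph `ElSusp(G)`: two new vertices `x = Sum.inr 0` and `y = Sum.inr 1` are
added to `G`, joined to each other by a single extra edge and to nothing else. -/
def ElSusp {V : Type*} (G : SimpleGraph V) : SimpleGraph (V ⊕ Fin 2) where
  Adj a b :=
    match a, b with
    | Sum.inl u, Sum.inl v => G.Adj u v
    | Sum.inl _, Sum.inr _ => False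
    | Sum.inr _, Sum.inl _ => False
    | Sum.inr i, Sum.inr j => i ≠ j
  symm := by
    refine ⟨?_⟩
    rintro (u | i) (v | j) h
    · exact G.symm.symm _ _ h
    · exact h.elim
    · exact h.elim
    · exact Ne.symm h
  loopless := by
    refine ⟨?_⟩
    rintro (u | i) h
    · exact G.loopless.irrefl u h
    · exact h rfl

/-- A nonempty subset `Y` of `V ∪ {x, y}` is enclaveless in `ElSusp(G)` if and only if
`Y` does not contain both `x` and `y`, and `Y ∩ V` is empty or enclaveless in `G`.
(This realizes the suspension: `El(ElSusp(G))` is the suspension of `El(G)` with apexes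
`x` and `y`.) -/
theorem enclaveless_ElSusp_iff {V : Type*} (G : SimpleGraph V) (Y : Set (V ⊕ Fin 2))
    (hY : Y.Nonempty) :
    Enclaveless (ElSusp G) Y ↔
      (¬ (Sum.inr 0 ∈ Y ∧ Sum.inr 1 ∈ Y) ∧
        (Sum.inl ⁻¹' Y = ∅ ∨ Enclaveless G (Sum.inl ⁻¹' Y))) := by
  constructor
  · intro hE
    refine ⟨?_, ?_⟩
    · rintro ⟨h0, h1⟩
      apply hE
      refine ⟨Sum.inr 0, h0, ?_⟩
      rintro z hz
      rcases hz with rfl | hz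
      · exact h0
      · rcases z with u | j
        · exact hz.elim
        · have : j = 1 := by
            have : (0 : Fin 2) ≠ j := hz
            omega
          subst this; exact h1
    · by_cases hpre : Sum.inl ⁻¹' Y = ∅
      · exact Or.inl hpre
      · refine Or.inr ?_
        rintro ⟨u, hu, hsub⟩
        apply hE
        refine ⟨Sum.inl u, hu, ?_⟩
        rintro z hz
        rcases hz with rfl | hz
        · exact hu
        · rcases z with v | j
          · exact hsub (Or.inr hz)
          · exact hz.elim
  · rintro ⟨hxy, hpre⟩ ⟨v, hv, hsub⟩
    rcases v with u | i
    · rcases hpre with hpre | hpre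
      · exact absurd (show u ∈ Sum.inl ⁻¹' Y from hv) (by rw [hpre]; exact not_false.elim ∘ id)
      · apply hpre
        refine ⟨u, hv, ?_⟩
        rintro z hz
        rcases hz with rfl | hz
        · exact hv
        · exact hsub (Or.inr hz)
    · apply hxy
      constructor
      · rcases eq_or_ne i 0 with rfl | h
        · exact hsub (Or.inl rfl)
        · exact hsub (Or.inr (by simpa [ElSusp, SimpleGraph.neighborSet] using h))
      · rcases eq_or_ne i 1 with rfl | h
        · exact hsub (Or.inl rfl)
        · exact hsub (Or.inr (by simpa [ElSusp, SimpleGraph.neighborSet] using h))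
end

section
/- Let (G, f) be a weighted graph with finitely many vertices. For t ∈ ℝ let G_t be the spanning subgraph of G whose edges are those edges e of G with f(e) ≤ t. Define f_El on simplices of El(G) by: for a singleton {v}, f_El({v}) is the minimum of f over the edges of G incident to v; for a simplex σ with at least 2 vertices, f_El(σ) is the infimum of the set {t ∈ ℝ : σ is contained in some enclaveless set of G_t}. Then f_El is monotone: for all simplices σ ⊆ τ of El(G), f_El(σ) ≤ f_El(τ). Hence (El(G), f_El) is a filtered simplicial complex. -/
/-- The spanning subgraph `G_t` of a weighted graph `(G, f)` whose edges are the edges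
`e` of `G` with `f e ≤ t`. -/
def sublevelGraph {V : Type*} (G : SimpleGraph V) (f : Sym2 V → ℝ) (t : ℝ) :
    SimpleGraph V where
  Adj u v := G.Adj u v ∧ f s(u, v) ≤ t
  symm := by
    constructor
    intro u v ⟨h, hf⟩
    exact ⟨h.symm, by rwa [Sym2.eq_swap]⟩
  loopless := by
    constructor
    intro v ⟨h, _⟩
    exact G.loopless.irrefl v h

/-- The filtering function `f_El` on the complex of enclaveless sets: on a singleton
`{v}` it is the minimum (infimum) of `f` over the edges of `G` incident to `v`; on a
simplex with at least 2 vertices it is the infimum of the `t` such that the simplex is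
contained in some enclaveless set of the sublevel graph `G_t`. -/
noncomputable def fEl {V : Type*} (G : SimpleGraph V) (f : Sym2 V → ℝ) (σ : Finset V) :
    ℝ :=
  if σ.card ≤ 1 then sInf {r : ℝ | ∃ e ∈ G.edgeSet, ∃ v ∈ σ, v ∈ e ∧ r = f e}
  else sInf {t : ℝ | ∃ Y : Set V, Enclaveless (sublevelGraph G f t) Y ∧ (σ : Set V) ⊆ Y}

/-- From an enclaveless set, every member has a neighbor outside the set. -/
lemma exists_adj_not_mem_of_enclaveless {V : Type*} {G : SimpleGraph V} {Y : Set V}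
    (hY : Enclaveless G Y) {v : V} (hv : v ∈ Y) :
    ∃ u, G.Adj v u ∧ u ∉ Y := by
  by_contra h
  push_neg at h
  refine hY ⟨v, hv, ?_⟩
  intro u hu
  rcases Set.mem_insert_iff.mp hu with rfl | hadj
  · exact hv
  · exact h u hadj

/-- Every member of an enclaveless set of `G_t` has an incident edge of weight ≤ t. -/
lemma cheap_edge {V : Type*} {G : SimpleGraph V} {f : Sym2 V → ℝ} {t : ℝ} {Y : Set V}
    (hY : Enclaveless (sublevelGraph G f t) Y) {v : V} (hv : v ∈ Y) :
    ∃ e ∈ G.edgeSet, v ∈ e ∧ f e ≤ t := by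
  obtain ⟨u, ⟨hadj, hft⟩, -⟩ := exists_adj_not_mem_of_enclaveless hY hv
  exact ⟨s(v, u), hadj, Sym2.mem_mk_left v u, hft⟩

/-- A nonempty enclaveless set forces the graph to have edges. -/
lemma edgeSet_nonempty_of_enclaveless {V : Type*} {G : SimpleGraph V} {Y : Set V}
    (hY : Enclaveless G Y) {v : V} (hv : v ∈ Y) : G.edgeSet.Nonempty := by
  obtain ⟨u, hadj, -⟩ := exists_adj_not_mem_of_enclaveless hY hv
  exact ⟨s(v, u), hadj⟩

/-- The sublevel-parameter set is nonempty for a nonempty enclaveless set. -/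
lemma paramSet_nonempty {V : Type*} [Fintype V] {G : SimpleGraph V} {f : Sym2 V → ℝ}
    {τ : Finset V} (hτne : τ.Nonempty) (hτ : Enclaveless G (τ : Set V)) :
    {t : ℝ | ∃ Y : Set V, Enclaveless (sublevelGraph G f t) Y ∧ (τ : Set V) ⊆ Y}.Nonempty := by
  obtain ⟨v, hv⟩ := hτne
  have hEne : G.edgeSet.Nonempty :=
    edgeSet_nonempty_of_enclaveless hτ (Finset.mem_coe.mpr hv)
  have hfin : (f '' G.edgeSet).Finite := (Set.toFinite G.edgeSet).image f
  set t := sSup (f '' G.edgeSet) with ht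
  have hle : ∀ e ∈ G.edgeSet, f e ≤ t := fun e he =>
    le_csSup hfin.bddAbove ⟨e, he, rfl⟩
  refine ⟨t, (τ : Set V), ?_, subset_rfl⟩
  rintro ⟨w, hw, hsub⟩
  refine hτ ⟨w, hw, ?_⟩
  intro u hu
  rcases Set.mem_insert_iff.mp hu with rfl | hadj
  · exact hw
  · exact hsub (Set.mem_insert_iff.mpr (Or.inr ⟨hadj, hle _ hadj⟩))

/-- The sublevel-parameter set is bounded below when the simplex is nonempty. -/
lemma paramSet_bddBelow {V : Type*} [Fintype V] {G : SimpleGraph V} {f : Sym2 V → ℝ}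
    {σ : Finset V} (hσne : σ.Nonempty) :
    BddBelow {t : ℝ | ∃ Y : Set V, Enclaveless (sublevelGraph G f t) Y ∧ (σ : Set V) ⊆ Y} := by
  have hfin : (f '' G.edgeSet).Finite := (Set.toFinite G.edgeSet).image f
  obtain ⟨v, hv⟩ := hσne
  refine ⟨sInf (f '' G.edgeSet), ?_⟩
  rintro t ⟨Y, hY, hsub⟩
  obtain ⟨e, he, -, hfe⟩ := cheap_edge hY (hsub (Finset.mem_coe.mpr hv))
  exact le_trans (csInf_le hfin.bddBelow ⟨e, he, rfl⟩) hfe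

/-- For a finite weighted graph `(G, f)`, the function `f_El` is monotone on the
simplices of the complex `El(G)` of enclaveless sets: if `σ ⊆ τ` are simplices of
`El(G)` (nonempty enclaveless sets of `G`), then `f_El σ ≤ f_El τ`.  Hence
`(El(G), f_El)` is a filtered simplicial complex. -/
theorem fEl_monotone {V : Type*} [Fintype V] (G : SimpleGraph V) (f : Sym2 V → ℝ)
    (σ τ : Finset V)
    (hσ : σ.Nonempty ∧ Enclaveless G (σ : Set V))
    (hτ : τ.Nonempty ∧ Enclaveless G (τ : Set V))
    (hστ : σ ⊆ τ) :
    fEl G f σ ≤ fEl G f τ := by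
  by_cases hσ1 : σ.card ≤ 1
  · by_cases hτ1 : τ.card ≤ 1
    · -- both singletons, hence equal
      have : σ = τ := Finset.eq_of_subset_of_card_le hστ
        (le_trans hτ1 (Finset.card_pos.mpr hσ.1))
      rw [this]
    · -- σ a singleton, τ larger
      rw [fEl, if_pos hσ1, fEl, if_neg hτ1]
      refine le_csInf (paramSet_nonempty hτ.1 hτ.2) ?_
      rintro t ⟨Y, hY, hsub⟩
      obtain ⟨v, hv⟩ := hσ.1
      obtain ⟨e, he, hve, hfe⟩ := cheap_edge hY (hsub (Finset.mem_coe.mpr (hστ hv)))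
      have hmem : f e ∈ {r : ℝ | ∃ e ∈ G.edgeSet, ∃ v ∈ σ, v ∈ e ∧ r = f e} :=
        ⟨e, he, v, hv, hve, rfl⟩
      have hbdd : BddBelow {r : ℝ | ∃ e ∈ G.edgeSet, ∃ v ∈ σ, v ∈ e ∧ r = f e} := by
        have hfin : (f '' G.edgeSet).Finite := (Set.toFinite G.edgeSet).image f
        refine hfin.bddBelow.mono ?_
        rintro r ⟨e, he, v, -, -, rfl⟩
        exact ⟨e, he, rfl⟩
      exact le_trans (csInf_le hbdd hmem) hfe
  · have hτ1 : ¬ τ.card ≤ 1 := fun h =>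
      hσ1 (le_trans (Finset.card_le_card hστ) h)
    rw [fEl, if_neg hσ1, fEl, if_neg hτ1]
    refine csInf_le_csInf (paramSet_bddBelow hσ.1) (paramSet_nonempty hτ.1 hτ.2) ?_
    rintro t ⟨Y, hY, hsub⟩
    exact ⟨Y, hY, fun x hx => hsub (Finset.coe_subset.mpr hστ hx)⟩
end

section
/- Let (G, f) and (G′, f′) be weighted graphs with finitely many vertices, each with at least one edge, and let ψ be a graph isomorphism from G to G′ (a bijection of the vertex sets such that u and v are adjacent in G if and only if ψ(u) and ψ(v) are adjacent in G′). Then for every clique σ of G with at least 2 vertices, |f_Cl(σ) − f′_Cl(ψ(σ))| ≤ max over the edges e of G of |f(e) − f′(ψ(e))|, and for every vertex v of G, |f_Cl(⟨v⟩) − f′_Cl(⟨ψ(v)⟩)| ≤ max over the edges e of G of |f(e) − f′(ψ(e))|. (Hence the natural pseudodistance between the filtered clique complexes is bounded above by the natural pseudodistance between the weighted graphs.) -/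
private lemma abs_sSup_sub_sSup_le {S T : Set ℝ} (hS : S.Nonempty) (hT : T.Nonempty)
    (hSb : BddAbove S) (hTb : BddAbove T) {D : ℝ}
    (h1 : ∀ r ∈ S, ∃ s ∈ T, |r - s| ≤ D) (h2 : ∀ s ∈ T, ∃ r ∈ S, |r - s| ≤ D) :
    |sSup S - sSup T| ≤ D := by
  rw [abs_sub_le_iff]
  constructor
  · rw [sub_le_iff_le_add]
    apply csSup_le hS
    intro r hr
    obtain ⟨s, hs, hrs⟩ := h1 r hr
    have h3 := le_csSup hTb hs
    have := abs_le.mp hrs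
    linarith
  · rw [sub_le_iff_le_add]
    apply csSup_le hT
    intro s hs
    obtain ⟨r, hr, hrs⟩ := h2 s hs
    have h3 := le_csSup hSb hr
    have := abs_le.mp hrs
    linarith

private lemma abs_sInf_sub_sInf_le {S T : Set ℝ} (hS : S.Nonempty) (hT : T.Nonempty)
    (hSb : BddBelow S) (hTb : BddBelow T) {D : ℝ}
    (h1 : ∀ r ∈ S, ∃ s ∈ T, |r - s| ≤ D) (h2 : ∀ s ∈ T, ∃ r ∈ S, |r - s| ≤ D) :
    |sInf S - sInf T| ≤ D := by
  rw [abs_sub_le_iff]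
  constructor
  · rw [sub_le_iff_le_add, add_comm, ← sub_le_iff_le_add]
    apply le_csInf hT
    intro s hs
    obtain ⟨r, hr, hrs⟩ := h2 s hs
    have h3 := csInf_le hSb hr
    have := abs_le.mp hrs
    linarith
  · rw [sub_le_iff_le_add, add_comm, ← sub_le_iff_le_add]
    apply le_csInf hS
    intro r hr
    obtain ⟨s, hs, hrs⟩ := h1 r hr
    have h3 := csInf_le hTb hs
    have := abs_le.mp hrs
    linarith

/-- Let `(G, f)` and `(G′, f′)` be finite weighted graphs, each with at least one edge,
and let `ψ : G ≃g G′` be a graph isomorphism.  Then for every clique `σ` of `G` with at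
least 2 vertices, `|f_Cl(σ) − f′_Cl(ψ(σ))|` is bounded by the maximum over the edges `e`
of `G` of `|f(e) − f′(ψ(e))|`, and the same bound holds for `|f_Cl(⟨v⟩) − f′_Cl(⟨ψ(v)⟩)|`
for every vertex `v`.  (Hence the natural pseudodistance between the filtered clique
complexes is bounded above by the natural pseudodistance between the weighted graphs.)
Here maxima and minima over the relevant finite nonempty sets of reals are expressed via
`sSup` and `sInf`. -/
theorem fCl_iso_stability {V V' : Type*} [Fintype V] [Fintype V'] [DecidableEq V']
    (G : SimpleGraph V) (G' : SimpleGraph V')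
    (f : Sym2 V → ℝ) (f' : Sym2 V' → ℝ)
    (hG : G.edgeSet.Nonempty) (hG' : G'.edgeSet.Nonempty)
    (ψ : G ≃g G') :
    (∀ σ : Finset V, G.IsClique (σ : Set V) → 2 ≤ σ.card →
      |sSup {r : ℝ | ∃ u ∈ σ, ∃ v ∈ σ, u ≠ v ∧ r = f s(u, v)} -
          sSup {r : ℝ | ∃ u ∈ σ.image ψ, ∃ v ∈ σ.image ψ, u ≠ v ∧ r = f' s(u, v)}| ≤
        sSup {d : ℝ | ∃ e ∈ G.edgeSet, d = |f e - f' (Sym2.map ψ e)|}) ∧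
    (∀ v : V,
      |sInf {r : ℝ | ∃ e ∈ G.edgeSet, v ∈ e ∧ r = f e} -
          sInf {r : ℝ | ∃ e ∈ G'.edgeSet, ψ v ∈ e ∧ r = f' e}| ≤
        sSup {d : ℝ | ∃ e ∈ G.edgeSet, d = |f e - f' (Sym2.map ψ e)|}) := by
  set Dset : Set ℝ := {d : ℝ | ∃ e ∈ G.edgeSet, d = |f e - f' (Sym2.map ψ e)|} with hDset
  have hDfin : Dset.Finite := by
    apply Set.Finite.subset (Set.finite_range (fun e : Sym2 V => |f e - f' (Sym2.map ψ e)|))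
    rintro d ⟨e, _, rfl⟩; exact ⟨e, rfl⟩
  have hDb : BddAbove Dset := hDfin.bddAbove
  have hDkey : ∀ e ∈ G.edgeSet, |f e - f' (Sym2.map ψ e)| ≤ sSup Dset := fun e he =>
    le_csSup hDb ⟨e, he, rfl⟩
  have hψinj : Function.Injective ψ := ψ.toEquiv.injective
  -- membership transfer
  have hmem : ∀ (v : V) (e : Sym2 V), ψ v ∈ Sym2.map ψ e ↔ v ∈ e := by
    intro v e
    rw [Sym2.mem_map]
    constructor
    · rintro ⟨a, ha, hav⟩; rwa [hψinj hav] at ha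
    · intro hv; exact ⟨v, hv, rfl⟩
  have hmapsymm : ∀ e' : Sym2 V', Sym2.map ψ (Sym2.map ψ.symm e') = e' := by
    intro e'
    rw [Sym2.map_map]
    convert congrFun Sym2.map_id e'
    exact ψ.toEquiv.apply_symm_apply _
    rfl
  constructor
  · intro σ hclique hcard
    set S : Set ℝ := {r : ℝ | ∃ u ∈ σ, ∃ v ∈ σ, u ≠ v ∧ r = f s(u, v)}
    set T : Set ℝ := {r : ℝ | ∃ u ∈ σ.image ψ, ∃ v ∈ σ.image ψ, u ≠ v ∧ r = f' s(u, v)}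
    have hSb : BddAbove S := by
      apply Set.Finite.bddAbove
      apply Set.Finite.subset (Set.finite_range f)
      rintro r ⟨u, _, v, _, _, rfl⟩; exact ⟨_, rfl⟩
    have hTb : BddAbove T := by
      apply Set.Finite.bddAbove
      apply Set.Finite.subset (Set.finite_range f')
      rintro r ⟨u, _, v, _, _, rfl⟩; exact ⟨_, rfl⟩
    obtain ⟨u, hu, v, hv, huv⟩ := Finset.one_lt_card.mp hcard
    have hS : S.Nonempty := ⟨f s(u, v), u, hu, v, hv, huv, rfl⟩
    have hT : T.Nonempty := ⟨f' s(ψ u, ψ v), ψ u, Finset.mem_image_of_mem ψ hu,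
      ψ v, Finset.mem_image_of_mem ψ hv, fun h => huv (hψinj h), rfl⟩
    apply abs_sSup_sub_sSup_le hS hT hSb hTb
    · rintro r ⟨a, ha, b, hb, hab, rfl⟩
      have hadj : G.Adj a b := hclique ha hb hab
      refine ⟨f' s(ψ a, ψ b), ⟨ψ a, Finset.mem_image_of_mem ψ ha,
        ψ b, Finset.mem_image_of_mem ψ hb, fun h => hab (hψinj h), rfl⟩, ?_⟩
      have := hDkey s(a, b) hadj
      simpa using this
    · rintro s ⟨a', ha', b', hb', hab', rfl⟩
      obtain ⟨a, ha, rfl⟩ := Finset.mem_image.mp ha'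
      obtain ⟨b, hb, rfl⟩ := Finset.mem_image.mp hb'
      have hab : a ≠ b := fun h => hab' (by rw [h])
      refine ⟨f s(a, b), ⟨a, ha, b, hb, hab, rfl⟩, ?_⟩
      have := hDkey s(a, b) (hclique ha hb hab)
      simpa using this
  · intro v
    set S : Set ℝ := {r : ℝ | ∃ e ∈ G.edgeSet, v ∈ e ∧ r = f e}
    set T : Set ℝ := {r : ℝ | ∃ e ∈ G'.edgeSet, ψ v ∈ e ∧ r = f' e}
    have hSfin : S.Finite := by
      apply Set.Finite.subset (Set.finite_range f)
      rintro r ⟨e, _, _, rfl⟩; exact ⟨_, rfl⟩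
    have hTfin : T.Finite := by
      apply Set.Finite.subset (Set.finite_range f')
      rintro r ⟨e, _, _, rfl⟩; exact ⟨_, rfl⟩
    have hcorr1 : ∀ r ∈ S, ∃ s ∈ T, |r - s| ≤ sSup Dset := by
      rintro r ⟨e, he, hve, rfl⟩
      exact ⟨f' (Sym2.map ψ e), ⟨Sym2.map ψ e, (SimpleGraph.Iso.map_mem_edgeSet_iff ψ).mpr he,
        (hmem v e).mpr hve, rfl⟩, hDkey e he⟩
    have hcorr2 : ∀ s ∈ T, ∃ r ∈ S, |r - s| ≤ sSup Dset := by
      rintro s ⟨e', he', hve', rfl⟩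
      set e := Sym2.map ψ.symm e' with hE
      have heq : Sym2.map ψ e = e' := hmapsymm e'
      have he : e ∈ G.edgeSet := by
        rw [← SimpleGraph.Iso.map_mem_edgeSet_iff ψ, heq]; exact he'
      have hve : v ∈ e := by rw [← hmem v e, heq]; exact hve'
      refine ⟨f e, ⟨e, he, hve, rfl⟩, ?_⟩
      rw [← heq]; exact hDkey e he
    rcases Set.eq_empty_or_nonempty S with hSe | hS
    · have hTe : T = ∅ := by
        rw [Set.eq_empty_iff_forall_notMem]
        rintro s hs
        obtain ⟨r, hr, _⟩ := hcorr2 s hs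
        rw [hSe] at hr; exact hr
      rw [hSe, hTe, Real.sInf_empty, sub_self, abs_zero]
      obtain ⟨e, he⟩ := hG
      exact le_trans (abs_nonneg _) (hDkey e he)
    · have hT : T.Nonempty := by
        obtain ⟨r, hr⟩ := hS
        obtain ⟨s, hs, _⟩ := hcorr1 r hr
        exact ⟨s, hs⟩
      exact abs_sInf_sub_sInf_le hS hT hSfin.bddBelow hTfin.bddBelow hcorr1 hcorr2
end
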